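/- Let ψ be the probability generating function of a nonnegative-integer valued random variable Y with P(Y=0) > 0 and P(Y=0) + P(Y=1) < 1 and E[Y] ≤ 1, and let g be the power series solution with g(0)=0 of g(z) = zψ(g(z)). For t in (0, R_ψ) define ψ_t(z) = ψ(tz)/ψ(t) and let g_t solve g_t(z) = zψ_t(g_t(z)). Then g_t(z) = g(tz/ψ(t))/t for all |z| ≤ 1. -/

import Mathlib

open PowerSeries

/-- Composition ψ(g) of formal power series, valid when g has zero constant term. -/
noncomputable def psComp (ψ g : PowerSeries ℝ) : PowerSeries ℝ :=
  PowerSeries.mk fun n => ∑ k ∈ Finset.range (n + 1),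
    (PowerSeries.coeff k ψ) * (PowerSeries.coeff n (g ^ k))

lemma psComp_uniq (ψ g1 g2 : PowerSeries ℝ)
    (h1 : g1 = PowerSeries.X * psComp ψ g1)
    (h2 : g2 = PowerSeries.X * psComp ψ g2) : g1 = g2 := by
  ext n
  induction n using Nat.strong_induction_on with
  | _ n ih =>
    have key : ∀ k, ∀ m < n, PowerSeries.coeff m (g1 ^ k) = PowerSeries.coeff m (g2 ^ k) := by
      intro k
      induction k with
      | zero => intro m _; simp
      | succ k ihk =>
        intro m hm
        rw [pow_succ, pow_succ, PowerSeries.coeff_mul, PowerSeries.coeff_mul]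
        apply Finset.sum_congr rfl
        intro p hp
        replace hp : p.1 + p.2 = m := Finset.HasAntidiagonal.mem_antidiagonal.mp hp
        have hp1 : p.1 < n := lt_of_le_of_lt (hp ▸ Nat.le_add_right _ _) hm
        have hp2 : p.2 < n := lt_of_le_of_lt (hp ▸ Nat.le_add_left _ _) hm
        rw [ihk p.1 hp1, ih p.2 hp2]
    match n with
    | 0 =>
      rw [h1, h2]
      simp [PowerSeries.coeff_zero_eq_constantCoeff, map_mul]
    | m + 1 =>
      rw [h1, h2, PowerSeries.coeff_succ_X_mul, PowerSeries.coeff_succ_X_mul,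
        psComp, psComp, PowerSeries.coeff_mk, PowerSeries.coeff_mk]
      exact Finset.sum_congr rfl fun k _ => by rw [key k m (Nat.lt_succ_self m)]

/-- Let ψ be the probability generating function of Y with P(Y=0) > 0,
P(Y=0)+P(Y=1) < 1, E[Y] ≤ 1, and g the solution (with g(0)=0) of g = zψ(g).
For t ∈ (0, R_ψ) let ψ_t(z) = ψ(tz)/ψ(t) and let g_t solve g_t = zψ_t(g_t).
Then g_t(z) = g(tz/ψ(t))/t, i.e. g_t = (1/t)·(rescale by t/ψ(t) of g). -/
theorem stmt_11 (b : ℕ → ℝ) (hbnn : ∀ n, 0 ≤ b n)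
    (hbsum : Summable b) (hbprob : (∑' n, b n) = 1)
    (hb0 : 0 < b 0) (hb01 : b 0 + b 1 < 1)
    (hmeansum : Summable (fun n : ℕ => (n : ℝ) * b n))
    (hmean : (∑' n : ℕ, (n : ℝ) * b n) ≤ 1)
    (R t : ℝ) (ht : t ∈ Set.Ioo 0 R)
    (hsumt : Summable (fun n => b n * t ^ n))
    (s : ℝ) (hs : s = ∑' n, b n * t ^ n)
    (ψ ψt : PowerSeries ℝ)
    (hψ : ψ = PowerSeries.mk b)
    (hψt : ψt = PowerSeries.mk (fun n => b n * t ^ n / s))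
    (g gt : PowerSeries ℝ)
    (hg0 : PowerSeries.constantCoeff g = 0)
    (hlag : g = PowerSeries.X * psComp ψ g)
    (hgt0 : PowerSeries.constantCoeff gt = 0)
    (hlagt : gt = PowerSeries.X * psComp ψt gt) :
    gt = PowerSeries.C (1 / t) * PowerSeries.rescale (t / s) g := by
  have ht0 : (0:ℝ) < t := ht.1
  have hs0 : (0:ℝ) < s := by
    rw [hs]
    have h1 : b 0 * t ^ 0 ≤ ∑' n, b n * t ^ n :=
      Summable.le_tsum hsumt 0 (fun i _ => mul_nonneg (hbnn i) (pow_nonneg ht0.le i))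
    simpa using lt_of_lt_of_le (by simpa using hb0) h1
  set h : PowerSeries ℝ := PowerSeries.C (1 / t) * PowerSeries.rescale (t / s) g with hdef
  have hpow : ∀ k m : ℕ, PowerSeries.coeff m (h ^ k)
      = (1 / t) ^ k * (t / s) ^ m * PowerSeries.coeff m (g ^ k) := by
    intro k m
    rw [hdef, mul_pow, ← map_pow, ← map_pow, PowerSeries.coeff_C_mul,
      PowerSeries.coeff_rescale]
    ring
  have hh : h = PowerSeries.X * psComp ψt h := by
    ext n
    match n with
    | 0 =>
      have : PowerSeries.coeff 0 h = 0 := by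
        have := hpow 1 0
        simpa [PowerSeries.coeff_zero_eq_constantCoeff, hg0] using this
      rw [this]
      simp [PowerSeries.coeff_zero_eq_constantCoeff, map_mul]
    | m + 1 =>
      rw [PowerSeries.coeff_succ_X_mul, psComp, PowerSeries.coeff_mk]
      have hA : PowerSeries.coeff (m+1) g
          = ∑ k ∈ Finset.range (m + 1), b k * PowerSeries.coeff m (g ^ k) := by
        conv_lhs => rw [hlag]
        rw [PowerSeries.coeff_succ_X_mul, psComp, PowerSeries.coeff_mk]
        exact Finset.sum_congr rfl fun k _ => by rw [hψ, PowerSeries.coeff_mk]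
      have hcoeff : PowerSeries.coeff (m+1) h
          = (1 / t) * (t / s) ^ (m+1) * PowerSeries.coeff (m+1) g := by
        simpa using hpow 1 (m+1)
      rw [hcoeff, hA, Finset.mul_sum]
      apply Finset.sum_congr rfl
      intro k hk
      rw [hψt, PowerSeries.coeff_mk, hpow k m]
      have htk : t ^ k ≠ 0 := pow_ne_zero _ ht0.ne'
      have ht1 : t ≠ 0 := ht0.ne'
      have hs1 : s ≠ 0 := hs0.ne'
      field_simp
      ring_nf
      field_simp
      rw [one_div_pow, mul_assoc _ (t ^ k), mul_one_div_cancel htk, mul_one]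
  exact psComp_uniq ψt gt h hlagt hh
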